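/- Let T : M_d(ℂ) → M_n(ℂ) be a quantum channel that is image additive with the identity channel on M_d(ℂ). Then there exists an entanglement breaking channel S : M_d(ℂ) → M_d(ℂ) such that T = T ∘ S. -/

import Mathlib

open Matrix Kronecker BigOperators Filter
open scoped InnerProductSpace ComplexOrder

noncomputable section

/-- `Mat d` is the algebra of `d × d` complex matrices. -/
abbrev Mat (d : ℕ) := Matrix (Fin d) (Fin d) ℂ

/-- A density matrix: positive semi-definite with unit trace. -/
def IsDensity {m : Type*} [Fintype m] (ρ : Matrix m m ℂ) : Prop :=
  ρ.PosSemidef ∧ ρ.trace = 1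

/-- The tensor product `T₁ ⊗ T₂` of two (linear) maps on matrix algebras. -/
def tensorFun {d₁ d₂ n₁ n₂ : ℕ} (T₁ : Mat d₁ → Mat n₁) (T₂ : Mat d₂ → Mat n₂)
    (ρ : Matrix (Fin d₁ × Fin d₂) (Fin d₁ × Fin d₂) ℂ) :
    Matrix (Fin n₁ × Fin n₂) (Fin n₁ × Fin n₂) ℂ :=
  ∑ i, ∑ j, ∑ k, ∑ l, ρ (i, k) (j, l) •
    (T₁ (Matrix.single i j 1) ⊗ₖ T₂ (Matrix.single k l 1))

/-- A quantum channel: completely positive and trace preserving. -/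
def IsChannel {d n : ℕ} (T : Mat d →ₗ[ℂ] Mat n) : Prop :=
  (∀ ρ, (T ρ).trace = ρ.trace) ∧
  ∀ k : ℕ, ∀ ρ : Matrix (Fin d × Fin k) (Fin d × Fin k) ℂ,
    ρ.PosSemidef → (tensorFun (T ·) (id : Mat k → Mat k) ρ).PosSemidef

/-- The image of the set of density matrices under a channel. -/
def chImage {d n : ℕ} (T : Mat d →ₗ[ℂ] Mat n) : Set (Mat n) :=
  (T ·) '' {ρ | IsDensity ρ}

/-- A POVM: a tuple of positive semi-definite matrices summing to the identity. -/
def IsPOVM {d k : ℕ} (M : Fin k → Mat d) : Prop :=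
  (∀ i, (M i).PosSemidef) ∧ ∑ i, M i = 1

/-- The operator norm of a matrix, acting on the Euclidean (ℓ²) space. -/
def opNorm {d : ℕ} (M : Mat d) : ℝ :=
  ‖(Matrix.toEuclideanCLM (𝕜 := ℂ) (n := Fin d)) M‖

/-- A separable bipartite state: a convex combination of tensor products of densities. -/
def SeparableState {d₁ d₂ : ℕ} (ρ : Matrix (Fin d₁ × Fin d₂) (Fin d₁ × Fin d₂) ℂ) : Prop :=
  ∃ (m : ℕ) (c : Fin m → ℝ) (A : Fin m → Mat d₁) (B : Fin m → Mat d₂),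
    (∀ i, 0 ≤ c i) ∧ (∑ i, c i = 1) ∧ (∀ i, IsDensity (A i)) ∧ (∀ i, IsDensity (B i)) ∧
    ρ = ∑ i, (c i : ℂ) • (A i ⊗ₖ B i)

/-- An entanglement breaking channel: `T ⊗ id` maps states to separable states. -/
def IsEntanglementBreaking {d n : ℕ} (T : Mat d →ₗ[ℂ] Mat n) : Prop :=
  ∀ ρ : Matrix (Fin d × Fin d) (Fin d × Fin d) ℂ, IsDensity ρ →
    SeparableState (tensorFun (T ·) (id : Mat d → Mat d) ρ)

/-- A vertex of a convex set `C`: a point of `C` such that the intersection of all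
supporting hyperplanes of `C` at that point is the point itself. -/
def IsVertex {n : ℕ} (C : Set (Mat n)) (x : Mat n) : Prop :=
  x ∈ C ∧ ∀ y : Mat n,
    (∀ f : Mat n →ₗ[ℝ] ℝ, (∀ z ∈ C, f z ≤ f x) → f y = f x) → y = x

/-- An essentially classical-quantum channel: `ρ ↦ ∑ᵢ Tr(Mᵢρ)σᵢ` for a POVM whose
elements all have operator norm one and density matrices `σᵢ`. -/
def IsEssentiallyCQ {d n : ℕ} (T : Mat d →ₗ[ℂ] Mat n) : Prop :=
  ∃ (k : ℕ) (M : Fin k → Mat d) (σ : Fin k → Mat n),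
    IsPOVM M ∧ (∀ i, opNorm (M i) = 1) ∧ (∀ i, IsDensity (σ i)) ∧
    ∀ ρ, T ρ = ∑ i, (M i * ρ).trace • σ i


-- Helper lemmas for stmt15

lemma psd_zero {m : Type*} [Fintype m] : (0 : Matrix m m ℂ).PosSemidef :=
  ⟨by simp [Matrix.IsHermitian], fun x => by simp⟩

lemma psd_one {m : Type*} [Fintype m] [DecidableEq m] : (1 : Matrix m m ℂ).PosSemidef :=
  Matrix.PosSemidef.one

lemma psd_smul_real {m : Type*} [Fintype m] {A : Matrix m m ℂ} (hA : A.PosSemidef)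
    {c : ℝ} (hc : 0 ≤ c) : ((c : ℂ) • A).PosSemidef := by
  refine Matrix.PosSemidef.of_dotProduct_mulVec_nonneg ?_ fun x => ?_
  · unfold Matrix.IsHermitian
    rw [Matrix.conjTranspose_smul, hA.1.eq]
    congr 1
    simp [RingHom.id_apply, Complex.conj_ofReal]
  · rw [Matrix.smul_mulVec, dotProduct_smul, smul_eq_mul]
    exact mul_nonneg (by exact_mod_cast hc) (hA.dotProduct_mulVec_nonneg x)

lemma psd_sum {m ι : Type*} [Fintype m] (s : Finset ι) (f : ι → Matrix m m ℂ)
    (h : ∀ i ∈ s, (f i).PosSemidef) : (∑ i ∈ s, f i).PosSemidef := by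
  classical
  induction s using Finset.induction_on with
  | empty => simpa using psd_zero
  | insert _ _ hx ih =>
    rw [Finset.sum_insert hx]
    exact (h _ (Finset.mem_insert_self _ _)).add
      (ih fun i hi => h i (Finset.mem_insert_of_mem hi))

lemma conjTranspose_kron {m₁ m₂ n₁ n₂ : Type*} (A : Matrix m₁ n₁ ℂ) (B : Matrix m₂ n₂ ℂ) :
    (A ⊗ₖ B)ᴴ = Aᴴ ⊗ₖ Bᴴ := by
  ext ⟨a, b⟩ ⟨c, e⟩
  simp [Matrix.conjTranspose_apply, Matrix.kroneckerMap_apply, mul_comm]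

lemma psd_kron {m₁ m₂ : Type*} [Fintype m₁] [Fintype m₂] [DecidableEq m₁] [DecidableEq m₂]
    {A : Matrix m₁ m₁ ℂ} {B : Matrix m₂ m₂ ℂ} (hA : A.PosSemidef) (hB : B.PosSemidef) :
    (A ⊗ₖ B).PosSemidef := by
  exact hA.kronecker hB

lemma psd_diag_nonneg {m : Type*} [Fintype m] [DecidableEq m] {A : Matrix m m ℂ}
    (hA : A.PosSemidef) (k : m) : 0 ≤ A k k := by
  have h0 := hA.dotProduct_mulVec_nonneg (Pi.single k 1)
  have h1 : star (Pi.single k 1 : m → ℂ) ⬝ᵥ (A *ᵥ Pi.single k 1) = A k k := by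
    simp [dotProduct, Matrix.mulVec_single, Pi.single_apply, apply_ite (star : ℂ → ℂ),
      ite_mul]
  rwa [h1] at h0

lemma psd_trace_nonneg {m : Type*} [Fintype m] [DecidableEq m] {A : Matrix m m ℂ}
    (hA : A.PosSemidef) : 0 ≤ A.trace :=
  Finset.sum_nonneg fun k _ => psd_diag_nonneg hA k

lemma nonneg_complex_eq_re {z : ℂ} (hz : 0 ≤ z) : z = ((z.re : ℝ) : ℂ) := by
  rw [Complex.le_def] at hz
  exact Complex.ext (by simp) (by simp [← hz.2])

lemma psd_trace_zero_eq_zero {m : Type*} [Fintype m] [DecidableEq m] {A : Matrix m m ℂ}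
    (hA : A.PosSemidef) (h : A.trace = 0) : A = 0 := by
  have hdiag : ∀ k, A k k = 0 := by
    intro k
    have := (Finset.sum_eq_zero_iff_of_nonneg (fun k _ => psd_diag_nonneg hA k)).mp h
    exact this k (Finset.mem_univ k)
  ext j k
  have hcol : A *ᵥ Pi.single k 1 = 0 := by
    rw [← hA.dotProduct_mulVec_zero_iff]
    have h1 : star (Pi.single k 1 : m → ℂ) ⬝ᵥ (A *ᵥ Pi.single k 1) = A k k := by
      simp [dotProduct, Matrix.mulVec_single, Pi.single_apply, apply_ite (star : ℂ → ℂ),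
        ite_mul]
    rw [h1]; exact hdiag k
  have := congrFun hcol j
  simpa [Matrix.mulVec_single] using this

/-- Entry formula for `T ⊗ id`. -/
lemma tensorFun_id_apply {d n m : ℕ} (T : Mat d →ₗ[ℂ] Mat n)
    (ρ : Matrix (Fin d × Fin m) (Fin d × Fin m) ℂ) (a c : Fin n) (k l : Fin m) :
    tensorFun (T ·) (id : Mat m → Mat m) ρ (a, k) (c, l)
      = ∑ i, ∑ j, ρ (i, k) (j, l) * (T (Matrix.single i j 1)) a c := by
  unfold tensorFun
  simp only [Matrix.sum_apply, Matrix.smul_apply, Matrix.kroneckerMap_apply, id_eq,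
    Matrix.single, Matrix.of_apply, smul_eq_mul]
  refine Finset.sum_congr rfl fun i _ => Finset.sum_congr rfl fun j _ => ?_
  rw [Finset.sum_comm]
  simp [ite_and, Finset.sum_ite_eq, Finset.sum_ite_eq']

/-- A linear map on matrices, entrywise, as a sum over standard basis matrices. -/
lemma map_entry_eq_sum {d n : ℕ} (T : Mat d →ₗ[ℂ] Mat n) (A : Mat d) (a c : Fin n) :
    (T A) a c = ∑ i, ∑ j, A i j * (T (Matrix.single i j 1)) a c := by
  conv_lhs => rw [Matrix.matrix_eq_sum_single A]
  rw [map_sum, Matrix.sum_apply]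
  refine Finset.sum_congr rfl fun i _ => ?_
  rw [map_sum, Matrix.sum_apply]
  refine Finset.sum_congr rfl fun j _ => ?_
  have : Matrix.single i j (A i j) = A i j • Matrix.single i j 1 := by
    simp
  rw [this, _root_.map_smul, Matrix.smul_apply, smul_eq_mul]

lemma contract_psd {d m : ℕ} {B : Mat d}
    (hB : B.PosSemidef) {ρ : Matrix (Fin d × Fin m) (Fin d × Fin m) ℂ} (hρ : ρ.PosSemidef) :
    (Matrix.of fun k l => ∑ i, ∑ j, B i j * ρ (i, k) (j, l) :
      Matrix (Fin m) (Fin m) ℂ).PosSemidef := by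
  obtain ⟨P, hPherm, hPmul⟩ : ∃ P : Mat d, Pᴴ = P ∧ P * P = B :=
    by open scoped MatrixOrder in
      exact ⟨CFC.sqrt B, (CFC.sqrt_nonneg B).posSemidef.isHermitian,
        CFC.sqrt_mul_sqrt_self B hB.nonneg⟩
  have hPh : ∀ i r, P i r = star (P r i) := by
    intro i r
    rw [← congrFun (congrFun hPherm i) r, Matrix.conjTranspose_apply]
  have hBij : ∀ i j, B i j = ∑ r, star (P r i) * P r j := by
    intro i j
    conv_lhs => rw [← hPmul]
    rw [Matrix.mul_apply]
    exact Finset.sum_congr rfl fun r _ => by rw [hPh i r]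
  set X : Fin d → Matrix (Fin d × Fin m) (Fin m) ℂ :=
    fun r => Matrix.of fun p l => P r p.1 * (if p.2 = l then 1 else 0) with hXdef
  have expand : ∀ r k l, ((X r)ᴴ * ρ * (X r)) k l
      = ∑ i, ∑ j, star (P r i) * P r j * ρ (i, k) (j, l) := by
    intro r k l
    simp only [Matrix.mul_apply, Matrix.conjTranspose_apply, hXdef, Matrix.of_apply,
      Fintype.sum_prod_type, star_mul', star_one, star_zero, mul_ite, ite_mul,
      mul_one, mul_zero, zero_mul, apply_ite (star : ℂ → ℂ), Finset.sum_ite_eq,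
      Finset.sum_ite_eq']
    simp only [Finset.mem_univ, if_true]
    rw [Finset.sum_comm]
    refine Finset.sum_congr rfl fun j _ => ?_
    rw [Finset.sum_mul]
    exact Finset.sum_congr rfl fun i _ => by ring
  have key : (Matrix.of fun k l => ∑ i, ∑ j, B i j * ρ (i, k) (j, l) :
      Matrix (Fin m) (Fin m) ℂ) = ∑ r, (X r)ᴴ * ρ * (X r) := by
    ext k l
    rw [Matrix.sum_apply]
    simp only [Matrix.of_apply, expand]
    have swap : ∑ r : Fin d, ∑ i, ∑ j, star (P r i) * P r j * ρ (i, k) (j, l)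
        = ∑ i, ∑ j, ∑ r : Fin d, star (P r i) * P r j * ρ (i, k) (j, l) := by
      rw [Finset.sum_comm]
      exact Finset.sum_congr rfl fun i _ => Finset.sum_comm
    rw [swap]
    refine Finset.sum_congr rfl fun i _ => Finset.sum_congr rfl fun j _ => ?_
    rw [hBij, Finset.sum_mul]
  rw [key]
  exact psd_sum _ _ fun r _ => hρ.conjTranspose_mul_mul_same (X r)

lemma sum_rot {α β γ : Type*} [Fintype α] [Fintype β] [Fintype γ] (f : α → β → γ → ℂ) :
    ∑ a, ∑ b, ∑ c, f a b c = ∑ c, ∑ a, ∑ b, f a b c :=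
  (Finset.sum_congr rfl fun _ _ => Finset.sum_comm).trans Finset.sum_comm

/-- if a channel `T` is image additive with the identity channel, then there
exists an entanglement breaking channel `S` with `T = T ∘ S`. -/
theorem stmt15 {d n : ℕ} (T : Mat d →ₗ[ℂ] Mat n) (hT : IsChannel T)
    (hia : ∀ ψ : Fin d × Fin d → ℂ, star ψ ⬝ᵥ ψ = 1 →
      ∃ ρ : Matrix (Fin d × Fin d) (Fin d × Fin d) ℂ,
        IsDensity ρ ∧ SeparableState ρ ∧
        tensorFun (T ·) (id : Mat d → Mat d) (vecMulVec ψ (star ψ)) =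
          tensorFun (T ·) (id : Mat d → Mat d) ρ) :
    ∃ S : Mat d →ₗ[ℂ] Mat d,
      IsChannel S ∧ IsEntanglementBreaking S ∧ T ∘ₗ S = T := by
  rcases Nat.eq_zero_or_pos d with hd | hd
  · -- degenerate case `d = 0`
    subst hd
    refine ⟨LinearMap.id, ⟨fun ρ => rfl, fun k ρ _ => ?_⟩, ?_, ?_⟩
    · exact ⟨Matrix.ext fun p q => p.1.elim0, fun x => by
        rw [Subsingleton.elim x 0]; simp⟩
    · intro ρ hρ
      exfalso
      have := hρ.2
      simp [Matrix.trace] at this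
    · exact LinearMap.comp_id T
  · -- main case `0 < d`
    have hdC : (d : ℂ) ≠ 0 := Nat.cast_ne_zero.mpr hd.ne'
    -- the maximally entangled unit vector
    set ψ : Fin d × Fin d → ℂ := fun p => if p.1 = p.2 then ((Real.sqrt d)⁻¹ : ℝ) else 0
      with hψdef
    have hsq : ((Real.sqrt d : ℝ) : ℂ) * ((Real.sqrt d : ℝ) : ℂ) = (d : ℂ) := by
      rw [← Complex.ofReal_mul, Real.mul_self_sqrt (Nat.cast_nonneg d)]
      simp
    have hψ : star ψ ⬝ᵥ ψ = 1 := by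
      simp only [dotProduct, Pi.star_apply, hψdef, Fintype.sum_prod_type,
        apply_ite (star : ℂ → ℂ), star_zero, ite_mul, mul_ite, zero_mul, mul_zero,
        Finset.sum_ite_eq, Finset.sum_ite_eq', Finset.mem_univ, if_true]
      rw [Finset.sum_const, Finset.card_univ, Fintype.card_fin, nsmul_eq_mul]
      rw [RCLike.star_def, Complex.conj_ofReal, Complex.ofReal_inv, ← mul_inv, hsq,
        mul_inv_cancel₀ hdC]
    obtain ⟨ρ₀, hρ₀, ⟨m, c, A, B, hc0, hc1, hA, hB, hρ₀eq⟩, hEq⟩ := hia ψ hψ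
    have hinv : (((Real.sqrt d)⁻¹ : ℝ) : ℂ) * (((Real.sqrt d)⁻¹ : ℝ) : ℂ) = (d : ℂ)⁻¹ := by
      rw [Complex.ofReal_inv, ← mul_inv, hsq]
    have hρ₀entry : ∀ i k j l : Fin d,
        ρ₀ (i, k) (j, l) = ∑ i', (c i' : ℂ) * (A i' i j * B i' k l) := by
      intro i k j l
      rw [hρ₀eq, Matrix.sum_apply]
      refine Finset.sum_congr rfl fun i' _ => ?_
      simp [Matrix.kroneckerMap_apply]
    -- the entrywise Choi identity
    have hE : ∀ (p q : Fin d) (a b : Fin n),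
        (d : ℂ)⁻¹ * (T (Matrix.single p q 1)) a b
          = ∑ i', (c i' : ℂ) * ((T (A i')) a b * B i' p q) := by
      intro p q a b
      have hent := Matrix.ext_iff.mpr hEq (a, p) (b, q)
      have hL : tensorFun (T ·) (id : Mat d → Mat d) (Matrix.vecMulVec ψ (star ψ)) (a, p) (b, q)
          = (d : ℂ)⁻¹ * (T (Matrix.single p q 1)) a b := by
        rw [tensorFun_id_apply]
        simp only [Matrix.vecMulVec_apply, Pi.star_apply, hψdef, apply_ite (star : ℂ → ℂ),
          star_zero, RCLike.star_def, Complex.conj_ofReal, ite_mul, zero_mul, mul_ite, mul_zero,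
          Finset.sum_ite_eq, Finset.sum_ite_eq', Finset.mem_univ, if_true]
        rw [hinv]
      have hR : tensorFun (T ·) (id : Mat d → Mat d) ρ₀ (a, p) (b, q)
          = ∑ i', (c i' : ℂ) * ((T (A i')) a b * B i' p q) := by
        rw [tensorFun_id_apply]
        calc (∑ i, ∑ j, ρ₀ (i, p) (j, q) * (T (Matrix.single i j 1)) a b)
            = ∑ i, ∑ j, ∑ i', (c i' : ℂ) * (A i' i j * B i' p q)
                * (T (Matrix.single i j 1)) a b := by
              refine Finset.sum_congr rfl fun i _ => Finset.sum_congr rfl fun j _ => ?_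
              rw [hρ₀entry, Finset.sum_mul]
          _ = ∑ i', ∑ i, ∑ j, (c i' : ℂ) * (A i' i j * B i' p q)
                * (T (Matrix.single i j 1)) a b := sum_rot _
          _ = ∑ i', (c i' : ℂ) * ((T (A i')) a b * B i' p q) := by
              refine Finset.sum_congr rfl fun i' _ => ?_
              rw [map_entry_eq_sum T (A i') a b]
              simp only [Finset.sum_mul, Finset.mul_sum]
              exact Finset.sum_congr rfl fun i _ => Finset.sum_congr rfl fun j _ => by ring
      rw [← hL, hent, hR]
    -- the marginal identity
    have h1 : ∀ p q : Fin d, ∑ i', (c i' : ℂ) * B i' p q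
        = (d : ℂ)⁻¹ * (if p = q then 1 else 0) := by
      intro p q
      have htrE : ∑ a, (T (Matrix.single p q 1)) a a = if p = q then 1 else 0 := by
        have h0 : (T (Matrix.single p q 1)).trace = (Matrix.single p q 1 : Mat d).trace :=
          hT.1 _
        have h2 : (Matrix.single p q 1 : Mat d).trace = if p = q then 1 else 0 := by
          simp [Matrix.trace, Matrix.diag, Matrix.single, ite_and,
            Finset.sum_ite_eq, eq_comm]
        rw [← h2, ← h0]; rfl
      have hTr : ∀ i', ∑ a, (T (A i')) a a = 1 := by
        intro i'
        have h0 : (T (A i')).trace = 1 := by rw [hT.1]; exact (hA i').2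
        rw [← h0]; rfl
      calc ∑ i', (c i' : ℂ) * B i' p q
          = ∑ i', ∑ a, (c i' : ℂ) * ((T (A i')) a a * B i' p q) := by
            refine Finset.sum_congr rfl fun i' _ => ?_
            have : ∑ a, (c i' : ℂ) * ((T (A i')) a a * B i' p q)
                = (c i' : ℂ) * ((∑ a, (T (A i')) a a) * B i' p q) := by
              rw [Finset.sum_mul, Finset.mul_sum]
            rw [this, hTr i', one_mul]
        _ = ∑ a, ∑ i', (c i' : ℂ) * ((T (A i')) a a * B i' p q) := Finset.sum_comm
        _ = ∑ a, (d : ℂ)⁻¹ * (T (Matrix.single p q 1)) a a := by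
            exact Finset.sum_congr rfl fun a _ => (hE p q a a).symm
        _ = (d : ℂ)⁻¹ * (if p = q then 1 else 0) := by
            rw [← Finset.mul_sum, htrE]
    -- the entanglement breaking channel
    let S : Mat d →ₗ[ℂ] Mat d :=
      { toFun := fun X => ∑ i', ((d : ℂ) * (c i' : ℂ) * ∑ p, ∑ q, B i' p q * X p q) • A i'
        map_add' := by
          intro X Y
          rw [← Finset.sum_add_distrib]
          refine Finset.sum_congr rfl fun i' _ => ?_
          rw [← add_smul]
          congr 1
          simp only [Matrix.add_apply, mul_add, Finset.sum_add_distrib]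
        map_smul' := by
          intro r X
          rw [Finset.smul_sum]
          refine Finset.sum_congr rfl fun i' _ => ?_
          rw [smul_smul]
          congr 1
          simp only [Matrix.smul_apply, smul_eq_mul, Finset.mul_sum]
          refine Finset.sum_congr rfl fun p _ => Finset.sum_congr rfl fun q _ => by
            rw [RingHom.id_apply]; ring }
    have hSapply : ∀ X : Mat d,
        S X = ∑ i', ((d : ℂ) * (c i' : ℂ) * ∑ p, ∑ q, B i' p q * X p q) • A i' := fun _ => rfl
    have hSstd : ∀ p q : Fin d,
        S (Matrix.single p q 1) = ∑ i', ((d : ℂ) * (c i' : ℂ) * B i' p q) • A i' := by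
      intro p q
      rw [hSapply]
      refine Finset.sum_congr rfl fun i' _ => ?_
      congr 2
      simp [Matrix.single, ite_and, mul_ite, Finset.sum_ite_eq, Finset.sum_ite_eq']
    -- trace preservation for S
    have hTP : ∀ X : Mat d, (S X).trace = X.trace := by
      intro X
      rw [hSapply, Matrix.trace_sum]
      simp only [Matrix.trace_smul, smul_eq_mul]
      calc ∑ i', ((d : ℂ) * (c i' : ℂ) * ∑ p, ∑ q, B i' p q * X p q) * (A i').trace
          = ∑ i', ∑ p, ∑ q, (c i' : ℂ) * B i' p q * ((d : ℂ) * X p q) := by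
            refine Finset.sum_congr rfl fun i' _ => ?_
            rw [(hA i').2, mul_one, Finset.mul_sum]
            refine Finset.sum_congr rfl fun p _ => ?_
            rw [Finset.mul_sum]
            exact Finset.sum_congr rfl fun q _ => by ring
        _ = ∑ p, ∑ q, ∑ i', (c i' : ℂ) * B i' p q * ((d : ℂ) * X p q) := (sum_rot _).symm
        _ = ∑ p, ∑ q, ((d : ℂ)⁻¹ * if p = q then 1 else 0) * ((d : ℂ) * X p q) := by
            refine Finset.sum_congr rfl fun p _ => Finset.sum_congr rfl fun q _ => ?_
            rw [← Finset.sum_mul, h1]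
        _ = X.trace := by
            simp only [ite_mul, one_mul, zero_mul, mul_ite, mul_zero]
            rw [Matrix.trace]
            refine Finset.sum_congr rfl fun p _ => ?_
            rw [Finset.sum_ite_eq Finset.univ p fun q => (d : ℂ)⁻¹ * 1 * ((d : ℂ) * X p q)]
            simp only [Finset.mem_univ, if_true, Matrix.diag_apply, mul_one]
            rw [← mul_assoc, inv_mul_cancel₀ hdC, one_mul]
    -- decomposition of `S ⊗ id`
    have hSdecomp : ∀ (m' : ℕ) (ρ : Matrix (Fin d × Fin m') (Fin d × Fin m') ℂ),
        tensorFun (S ·) (id : Mat m' → Mat m') ρ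
          = ∑ i', ((d : ℂ) * (c i' : ℂ)) •
              (A i' ⊗ₖ (Matrix.of fun u v => ∑ p, ∑ q, B i' p q * ρ (p, u) (q, v) :
                Matrix (Fin m') (Fin m') ℂ)) := by
      intro m' ρ
      ext ⟨a, u⟩ ⟨b, v⟩
      rw [tensorFun_id_apply, Matrix.sum_apply]
      simp only [Matrix.smul_apply, Matrix.kroneckerMap_apply, Matrix.of_apply, smul_eq_mul]
      calc ∑ p, ∑ q, ρ (p, u) (q, v) * (S (Matrix.single p q 1)) a b
          = ∑ p, ∑ q, ∑ i', ρ (p, u) (q, v) * ((d : ℂ) * (c i' : ℂ) * B i' p q * A i' a b) := by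
            refine Finset.sum_congr rfl fun p _ => Finset.sum_congr rfl fun q _ => ?_
            rw [hSstd p q, Matrix.sum_apply, Finset.mul_sum]
            refine Finset.sum_congr rfl fun i' _ => ?_
            rw [Matrix.smul_apply, smul_eq_mul]
        _ = ∑ i', ∑ p, ∑ q, ρ (p, u) (q, v) * ((d : ℂ) * (c i' : ℂ) * B i' p q * A i' a b) :=
            sum_rot _
        _ = ∑ i', (d : ℂ) * (c i' : ℂ) * (A i' a b * ∑ p, ∑ q, B i' p q * ρ (p, u) (q, v)) := by
            refine Finset.sum_congr rfl fun i' _ => ?_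
            simp only [Finset.mul_sum]
            refine Finset.sum_congr rfl fun p _ => Finset.sum_congr rfl fun q _ => by ring
    -- complete positivity of S
    have hCP : ∀ (k : ℕ) (ρ : Matrix (Fin d × Fin k) (Fin d × Fin k) ℂ), ρ.PosSemidef →
        (tensorFun (S ·) (id : Mat k → Mat k) ρ).PosSemidef := by
      intro k ρ hρ
      rw [hSdecomp]
      refine psd_sum _ _ fun i' _ => ?_
      have hco : ((d : ℂ) * (c i' : ℂ)) = (((d * c i' : ℝ)) : ℂ) := by push_cast; ring
      rw [hco]
      exact psd_smul_real (psd_kron (hA i').1 (contract_psd (hB i').1 hρ))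
        (mul_nonneg (Nat.cast_nonneg d) (hc0 i'))
    -- entanglement breaking
    have hEB : IsEntanglementBreaking S := by
      intro ρ hρ
      set C : Fin m → Mat d := fun i' =>
        Matrix.of fun u v => ∑ p, ∑ q, B i' p q * ρ (p, u) (q, v) with hCdef
      have hCpsd : ∀ i', (C i').PosSemidef := fun i' => contract_psd (hB i').1 hρ.1
      set r : Fin m → ℝ := fun i' => ((C i').trace).re with hrdef
      have hrt : ∀ i', (C i').trace = ((r i' : ℝ) : ℂ) := fun i' =>
        nonneg_complex_eq_re (psd_trace_nonneg (hCpsd i'))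
      have hr0 : ∀ i', 0 ≤ r i' := by
        intro i'
        have h0 := psd_trace_nonneg (hCpsd i')
        rw [Complex.le_def] at h0
        simpa [hrdef] using h0.1
      have hsum : ∑ i', ((d : ℂ) * (c i' : ℂ)) * (C i').trace = 1 := by
        calc ∑ i', ((d : ℂ) * (c i' : ℂ)) * (C i').trace
            = ∑ i', ∑ u, ∑ p, ∑ q,
                (d : ℂ) * ((c i' : ℂ) * B i' p q) * ρ (p, u) (q, u) := by
              refine Finset.sum_congr rfl fun i' _ => ?_
              rw [Matrix.trace, Finset.mul_sum]
              refine Finset.sum_congr rfl fun u _ => ?_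
              simp only [Matrix.diag_apply, hCdef, Matrix.of_apply, Finset.mul_sum]
              refine Finset.sum_congr rfl fun p _ => Finset.sum_congr rfl fun q _ => by ring
          _ = ∑ u, ∑ i', ∑ p, ∑ q,
                (d : ℂ) * ((c i' : ℂ) * B i' p q) * ρ (p, u) (q, u) := Finset.sum_comm
          _ = ∑ u, ∑ p, ∑ q, ∑ i',
                (d : ℂ) * ((c i' : ℂ) * B i' p q) * ρ (p, u) (q, u) :=
              Finset.sum_congr rfl fun u _ => (sum_rot _).symm
          _ = ∑ u, ∑ p, ∑ q,
                ((d : ℂ) * ((d : ℂ)⁻¹ * if p = q then 1 else 0)) * ρ (p, u) (q, u) := by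
              refine Finset.sum_congr rfl fun u _ => Finset.sum_congr rfl fun p _ =>
                Finset.sum_congr rfl fun q _ => ?_
              rw [← Finset.sum_mul, ← Finset.mul_sum, h1]
          _ = ∑ u, ∑ p, ρ (p, u) (p, u) := by
              refine Finset.sum_congr rfl fun u _ => Finset.sum_congr rfl fun p _ => ?_
              simp only [← mul_assoc, mul_inv_cancel₀ hdC, one_mul, ite_mul, zero_mul]
              rw [Finset.sum_ite_eq Finset.univ p fun q => ρ (p, u) (q, u)]
              simp
          _ = 1 := by
              rw [← hρ.2, Matrix.trace]
              rw [Fintype.sum_prod_type]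
              exact Finset.sum_comm
      have hwsum : ∑ i', d * c i' * r i' = 1 := by
        have h2 : ((∑ i', d * c i' * r i' : ℝ) : ℂ) = 1 := by
          calc ((∑ i', d * c i' * r i' : ℝ) : ℂ)
              = ∑ i', ((d : ℂ) * (c i' : ℂ)) * (C i').trace := by
                push_cast
                refine Finset.sum_congr rfl fun i' _ => ?_
                rw [hrt i']
            _ = 1 := hsum
        exact_mod_cast h2
      refine ⟨m, fun i' => d * c i' * r i', A, fun i' =>
        if r i' = 0 then (((d : ℝ)⁻¹ : ℝ) : ℂ) • (1 : Mat d)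
        else (((r i')⁻¹ : ℝ) : ℂ) • C i',
        fun i' => mul_nonneg (mul_nonneg (Nat.cast_nonneg d) (hc0 i')) (hr0 i'),
        hwsum, hA, ?_, ?_⟩
      · intro i'
        by_cases h : r i' = 0
        · dsimp only
          rw [if_pos h]
          refine ⟨psd_smul_real psd_one (by positivity), ?_⟩
          rw [Matrix.trace_smul, Matrix.trace_one, smul_eq_mul]
          push_cast
          simp only [Fintype.card_fin]
          rw [inv_mul_cancel₀ hdC]
        · dsimp only
          rw [if_neg h]
          refine ⟨psd_smul_real (hCpsd i') (inv_nonneg.mpr (hr0 i')), ?_⟩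
          rw [Matrix.trace_smul, hrt i', smul_eq_mul, ← Complex.ofReal_mul,
            inv_mul_cancel₀ h, Complex.ofReal_one]
      · rw [hSdecomp]
        refine Finset.sum_congr rfl fun i' _ => ?_
        dsimp only
        by_cases h : r i' = 0
        · have hC0 : C i' = 0 := psd_trace_zero_eq_zero (hCpsd i') (by rw [hrt i', h]; simp)
          have h2 : ((d * c i' * r i' : ℝ) : ℂ) = 0 := by rw [h]; push_cast; ring
          have hC0' : (Matrix.of fun u v => ∑ p, ∑ q, B i' p q * ρ (p, u) (q, v) : Mat d) = 0 :=
            hC0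
          rw [h2, zero_smul, hC0']
          have h3 : (A i' ⊗ₖ (0 : Mat d)) = 0 := by
            ext ⟨a, u⟩ ⟨b, v⟩
            simp [Matrix.kroneckerMap_apply]
          rw [h3, smul_zero]
        · rw [if_neg h, Matrix.kronecker_smul, smul_smul]
          congr 1
          have hrC : ((r i' : ℝ) : ℂ) ≠ 0 := Complex.ofReal_ne_zero.mpr h
          push_cast
          rw [mul_assoc, mul_inv_cancel₀ hrC, mul_one]
    -- T ∘ S = T
    have hTS : T ∘ₗ S = T := by
      apply LinearMap.ext
      intro X
      rw [LinearMap.comp_apply, hSapply, map_sum]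
      apply Matrix.ext
      intro a b
      rw [Matrix.sum_apply]
      calc ∑ i', (T (((d : ℂ) * (c i' : ℂ) * ∑ p, ∑ q, B i' p q * X p q) • A i')) a b
          = ∑ i', ∑ p, ∑ q, (d : ℂ) * ((c i' : ℂ) * (T (A i') a b * B i' p q)) * X p q := by
            refine Finset.sum_congr rfl fun i' _ => ?_
            rw [_root_.map_smul, Matrix.smul_apply, smul_eq_mul]
            simp only [Finset.mul_sum, Finset.sum_mul]
            exact Finset.sum_congr rfl fun p _ => Finset.sum_congr rfl fun q _ => by ring
        _ = ∑ p, ∑ q, ∑ i', (d : ℂ) * ((c i' : ℂ) * (T (A i') a b * B i' p q)) * X p q :=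
            (sum_rot _).symm
        _ = ∑ p, ∑ q, X p q * (T (Matrix.single p q 1)) a b := by
            refine Finset.sum_congr rfl fun p _ => Finset.sum_congr rfl fun q _ => ?_
            have h4 : (d : ℂ) * (∑ i', (c i' : ℂ) * (T (A i') a b * B i' p q)) * X p q
                = ∑ i', (d : ℂ) * ((c i' : ℂ) * (T (A i') a b * B i' p q)) * X p q := by
              rw [Finset.mul_sum, Finset.sum_mul]
            rw [← h4, ← hE p q a b, ← mul_assoc, mul_inv_cancel₀ hdC, one_mul, mul_comm]
        _ = (T X) a b := (map_entry_eq_sum T X a b).symm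
    exact ⟨S, ⟨hTP, hCP⟩, hEB, hTS⟩
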